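/- arXiv:2412.10276 — 2 statements merged into one kernel-verified Lean document; each statement's English description precedes it below -/
import Mathlib

section
/- Let X and Y be random vectors in ℝ^d with finite first absolute moments, distributions μ and ν. Suppose (E|X|^p)^{1/p} ≤ b and (E|Y|^p)^{1/p} ≤ b for some p > 1. Then W(μ,ν) ≤ 3·W^{(r)}(μ,ν) + 4b·(2b/r)^{p-1} for any r > 0, where W^{(r)}(μ,ν) = sup{|∫u dμ − ∫u dν| : u ∈ U_r} and U_r is the set of functions u : ℝ^d → ℝ with Lipschitz seminorm at most 1, u(0)=0, supported on the closed ball B_r. -/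
open MeasureTheory

/-- Kantorovich (Wasserstein-1) distance via Kantorovich duality. -/
noncomputable def wassersteinDual {E : Type*} [MeasurableSpace E] [PseudoMetricSpace E]
    (μ ν : Measure E) : ℝ :=
  ⨆ u : {u : E → ℝ // LipschitzWith 1 u}, |(∫ x, u.1 x ∂μ) - ∫ x, u.1 x ∂ν|

/-- The restricted distance `W^{(r)}`: supremum over 1-Lipschitz functions vanishing
at the origin and supported on the closed ball of radius `r`. -/
noncomputable def wassersteinDualRestricted {d : ℕ} (r : ℝ)
    (μ ν : Measure (EuclideanSpace ℝ (Fin d))) : ℝ :=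
  ⨆ u : {u : EuclideanSpace ℝ (Fin d) → ℝ //
      LipschitzWith 1 u ∧ u 0 = 0 ∧ ∀ x, r < ‖x‖ → u x = 0},
    |(∫ x, u.1 x ∂μ) - ∫ x, u.1 x ∂ν|

/-- If the `p`-th moment is integrable (with `p > 1`) w.r.t. a probability measure, then the
first moment is integrable. -/
lemma integrable_norm_of_rpow {d : ℕ} {μ : Measure (EuclideanSpace ℝ (Fin d))}
    [IsProbabilityMeasure μ] {p : ℝ} (hp : 1 < p)
    (h : Integrable (fun x => ‖x‖ ^ p) μ) :
    Integrable (fun x : EuclideanSpace ℝ (Fin d) => ‖x‖) μ := by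
  refine Integrable.mono' ((integrable_const (1 : ℝ)).add h)
    continuous_norm.aestronglyMeasurable ?_
  filter_upwards with x
  simp only [Pi.add_apply]
  rw [Real.norm_eq_abs, abs_norm]
  rcases le_total ‖x‖ 1 with hx | hx
  · have h0 : (0 : ℝ) ≤ ‖x‖ ^ p := Real.rpow_nonneg (norm_nonneg x) p
    linarith
  · have h1 : ‖x‖ ^ (1 : ℝ) ≤ ‖x‖ ^ p := Real.rpow_le_rpow_of_exponent_le hx hp.le
    rw [Real.rpow_one] at h1
    have h0 : (0 : ℝ) ≤ ‖x‖ ^ p := Real.rpow_nonneg (norm_nonneg x) p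
    linarith

/-- A 1-Lipschitz function is integrable w.r.t. a probability measure with integrable
first moment. -/
lemma lipschitz_integrable {d : ℕ} {μ : Measure (EuclideanSpace ℝ (Fin d))}
    [IsProbabilityMeasure μ] {f : EuclideanSpace ℝ (Fin d) → ℝ}
    (hf : LipschitzWith 1 f) (hnorm : Integrable (fun x : EuclideanSpace ℝ (Fin d) => ‖x‖) μ) :
    Integrable f μ := by
  refine Integrable.mono' ((integrable_const (|f 0|)).add hnorm)
    hf.continuous.aestronglyMeasurable ?_
  filter_upwards with x
  simp only [Pi.add_apply]
  have h1 : dist (f x) (f 0) ≤ 1 * dist x 0 := hf.dist_le_mul x 0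
  rw [Real.dist_eq, dist_zero_right, one_mul] at h1
  have h2 : |f x| - |f 0| ≤ |f x - f 0| := abs_sub_abs_le_abs_sub _ _
  rw [Real.norm_eq_abs]
  linarith

theorem wasserstein_le_restricted {d : ℕ}
    (μ ν : Measure (EuclideanSpace ℝ (Fin d)))
    [IsProbabilityMeasure μ] [IsProbabilityMeasure ν]
    (p b r : ℝ) (hp : 1 < p) (hb : 0 ≤ b) (hr : 0 < r)
    (hμint : Integrable (fun x => ‖x‖ ^ p) μ) (hνint : Integrable (fun x => ‖x‖ ^ p) ν)
    (hμ : (∫ x, ‖x‖ ^ p ∂μ) ^ (1 / p) ≤ b) (hν : (∫ x, ‖x‖ ^ p ∂ν) ^ (1 / p) ≤ b) :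
    wassersteinDual μ ν ≤
      3 * wassersteinDualRestricted r μ ν + 4 * b * (2 * b / r) ^ (p - 1) := by
  set E := EuclideanSpace ℝ (Fin d)
  have hp0 : (0 : ℝ) < p := lt_trans one_pos hp
  have hμn : Integrable (fun x : E => ‖x‖) μ := integrable_norm_of_rpow hp hμint
  have hνn : Integrable (fun x : E => ‖x‖) ν := integrable_norm_of_rpow hp hνint
  -- the moment bounds
  have moment : ∀ (ρ : Measure E), IsProbabilityMeasure ρ →
      (∫ x, ‖x‖ ^ p ∂ρ) ^ (1 / p) ≤ b → ∫ x, ‖x‖ ^ p ∂ρ ≤ b ^ p := by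
    intro ρ _ hρ
    have hI : 0 ≤ ∫ x, ‖x‖ ^ p ∂ρ :=
      integral_nonneg fun x => Real.rpow_nonneg (norm_nonneg x) p
    have h1 : ((∫ x, ‖x‖ ^ p ∂ρ) ^ (1 / p)) ^ p = ∫ x, ‖x‖ ^ p ∂ρ := by
      rw [← Real.rpow_mul hI, one_div_mul_cancel hp0.ne', Real.rpow_one]
    calc ∫ x, ‖x‖ ^ p ∂ρ = ((∫ x, ‖x‖ ^ p ∂ρ) ^ (1 / p)) ^ p := h1.symm
      _ ≤ b ^ p := Real.rpow_le_rpow (Real.rpow_nonneg hI _) hρ hp0.le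
  have hμp : ∫ x, ‖x‖ ^ p ∂μ ≤ b ^ p := moment μ inferInstance hμ
  have hνp : ∫ x, ‖x‖ ^ p ∂ν ≤ b ^ p := moment ν inferInstance hν
  set c : ℝ := (2 / r) ^ (p - 1) * b ^ p with hc
  have hc0 : 0 ≤ c :=
    mul_nonneg (Real.rpow_nonneg (by positivity) _) (Real.rpow_nonneg hb _)
  set Wr := wassersteinDualRestricted r μ ν with hWrdef
  have hWr0 : 0 ≤ Wr := Real.iSup_nonneg fun u => abs_nonneg _
  -- boundedness of the restricted supremum family
  have habs_r : ∀ (f : E → ℝ), LipschitzWith 1 f → f 0 = 0 → (∀ x, r < ‖x‖ → f x = 0) →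
      ∀ x, |f x| ≤ r := by
    intro f hf hf0 hfs x
    rcases le_or_gt ‖x‖ r with hx | hx
    · have h1 : dist (f x) (f 0) ≤ 1 * dist x 0 := hf.dist_le_mul x 0
      rw [Real.dist_eq, dist_zero_right, one_mul, hf0, sub_zero] at h1
      linarith
    · rw [hfs x hx]; simpa using hr.le
  have hbdd : BddAbove (Set.range fun u : {u : E → ℝ //
      LipschitzWith 1 u ∧ u 0 = 0 ∧ ∀ x, r < ‖x‖ → u x = 0} =>
      |(∫ x, u.1 x ∂μ) - ∫ x, u.1 x ∂ν|) := by
    refine ⟨2 * r, ?_⟩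
    rintro y ⟨⟨f, hf, hf0, hfs⟩, rfl⟩
    have hμf : ‖∫ x, f x ∂μ‖ ≤ r * (μ Set.univ).toReal :=
      norm_integral_le_of_norm_le_const (Filter.Eventually.of_forall fun x => by
        rw [Real.norm_eq_abs]; exact habs_r f hf hf0 hfs x)
    have hνf : ‖∫ x, f x ∂ν‖ ≤ r * (ν Set.univ).toReal :=
      norm_integral_le_of_norm_le_const (Filter.Eventually.of_forall fun x => by
        rw [Real.norm_eq_abs]; exact habs_r f hf hf0 hfs x)
    simp only [measure_univ, ENNReal.toReal_one, mul_one, Real.norm_eq_abs] at hμf hνf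
    calc |(∫ x, f x ∂μ) - ∫ x, f x ∂ν| ≤ |∫ x, f x ∂μ| + |∫ x, f x ∂ν| := abs_sub _ _
      _ ≤ 2 * r := by linarith
  -- the key estimate for each 1-Lipschitz function
  have key : ∀ u : {u : E → ℝ // LipschitzWith 1 u},
      |(∫ x, u.1 x ∂μ) - ∫ x, u.1 x ∂ν| ≤ Wr + 2 * c := by
    rintro ⟨u, hu⟩
    set w : E → ℝ := fun x => u x - u 0 with hwdef
    have lw : LipschitzWith 1 w := by
      simpa using hu.sub (LipschitzWith.const (u 0))
    have hw0 : w 0 = 0 := by simp [hwdef]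
    have hwle : ∀ x, |w x| ≤ ‖x‖ := by
      intro x
      have h1 : dist (w x) (w 0) ≤ 1 * dist x 0 := lw.dist_le_mul x 0
      rwa [Real.dist_eq, dist_zero_right, one_mul, hw0, sub_zero] at h1
    set t : E → ℝ := fun x => max (r - ‖x‖) 0 with htdef
    have lt' : LipschitzWith 1 t := by
      have h : LipschitzWith 1 fun x : E => r - ‖x‖ := by
        simpa using (LipschitzWith.const r).sub lipschitzWith_one_norm
      exact h.max_const 0
    have ht0 : ∀ x, 0 ≤ t x := fun x => le_max_right _ _
    set v : E → ℝ := fun x => max (-(t x)) (min (w x) (t x)) with hvdef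
    have lv : LipschitzWith 1 v := by
      have h := (lt'.neg).max (lw.min lt')
      simpa using h
    have hv0 : v 0 = 0 := by
      have ht00 : t 0 = r := by simp [htdef, hr.le]
      simp only [hvdef, ht00, hw0]
      rw [min_eq_left hr.le, max_eq_right (by linarith : -r ≤ (0:ℝ))]
    have hvsupp : ∀ x, r < ‖x‖ → v x = 0 := by
      intro x hx
      have htx : t x = 0 := by
        simp only [htdef]
        exact max_eq_right (by linarith)
      simp only [hvdef, htx, neg_zero]
      exact max_eq_left (min_le_right _ _)
    -- pointwise estimate for |w - v|
    have h_wv : ∀ x, |w x - v x| ≤ (2 / r) ^ (p - 1) * ‖x‖ ^ p := by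
      intro x
      have hrhs : 0 ≤ (2 / r) ^ (p - 1) * ‖x‖ ^ p :=
        mul_nonneg (Real.rpow_nonneg (by positivity) _) (Real.rpow_nonneg (norm_nonneg _) _)
      rcases le_or_gt ‖x‖ (r / 2) with hx | hx
      · -- here v x = w x
        have htx : ‖x‖ ≤ t x := le_max_of_le_left (by linarith)
        have h1 : w x ≤ t x := (le_abs_self _).trans ((hwle x).trans htx)
        have h2 : -(t x) ≤ w x := by
          have h3 := neg_abs_le (w x)
          have h4 := (hwle x).trans htx
          linarith
        have hvx : v x = w x := by
          simp only [hvdef]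
          rw [min_eq_left h1, max_eq_right h2]
        rw [hvx, sub_self, abs_zero]
        exact hrhs
      · -- here |w x - v x| ≤ |w x| ≤ ‖x‖ ≤ rhs
        have hxpos : 0 < ‖x‖ := lt_of_le_of_lt (by positivity) hx
        have habs := hwle x
        have hneg := neg_abs_le (w x)
        have hle := le_abs_self (w x)
        have htx := ht0 x
        have hn := norm_nonneg x
        have step1 : |w x - v x| ≤ ‖x‖ := by
          rcases le_total (w x) (-(t x)) with h1 | h1
          · have hvx : v x = -(t x) := by
              simp only [hvdef]
              rw [min_eq_left (h1.trans (by linarith)), max_eq_left h1]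
            rw [hvx, abs_le]
            constructor <;> linarith
          · rcases le_total (w x) (t x) with h2 | h2
            · have hvx : v x = w x := by
                simp only [hvdef]
                rw [min_eq_left h2, max_eq_right h1]
              rw [hvx, sub_self, abs_zero]; exact hn
            · have hvx : v x = t x := by
                simp only [hvdef]
                rw [min_eq_right h2, max_eq_right (by linarith : -(t x) ≤ t x)]
              rw [hvx, abs_le]
              constructor <;> linarith
        have h2x : 1 ≤ 2 * ‖x‖ / r := by rw [le_div_iff₀ hr]; linarith
        have h3 : (1 : ℝ) ≤ (2 * ‖x‖ / r) ^ (p - 1) := by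
          calc (1 : ℝ) = 1 ^ (p - 1) := (Real.one_rpow _).symm
            _ ≤ (2 * ‖x‖ / r) ^ (p - 1) :=
                Real.rpow_le_rpow zero_le_one h2x (by linarith)
        have h4 : (2 * ‖x‖ / r) ^ (p - 1) = (2 / r) ^ (p - 1) * ‖x‖ ^ (p - 1) := by
          rw [show 2 * ‖x‖ / r = (2 / r) * ‖x‖ by ring,
            Real.mul_rpow (by positivity) (norm_nonneg x)]
        have h5 : ‖x‖ ^ p = ‖x‖ ^ (p - 1) * ‖x‖ := by
          have he : p - 1 + 1 = p := by ring
          have h := Real.rpow_add hxpos (p - 1) 1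
          rw [Real.rpow_one, he] at h
          exact h
        calc |w x - v x| ≤ ‖x‖ := step1
          _ = 1 * ‖x‖ := (one_mul _).symm
          _ ≤ (2 * ‖x‖ / r) ^ (p - 1) * ‖x‖ := mul_le_mul_of_nonneg_right h3 hn
          _ = (2 / r) ^ (p - 1) * (‖x‖ ^ (p - 1) * ‖x‖) := by rw [h4]; ring
          _ = (2 / r) ^ (p - 1) * ‖x‖ ^ p := by rw [← h5]
    -- integrability
    have intμu : Integrable u μ := lipschitz_integrable hu hμn
    have intνu : Integrable u ν := lipschitz_integrable hu hνn
    have intμw : Integrable w μ := lipschitz_integrable lw hμn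
    have intνw : Integrable w ν := lipschitz_integrable lw hνn
    have intμv : Integrable v μ := lipschitz_integrable lv hμn
    have intνv : Integrable v ν := lipschitz_integrable lv hνn
    -- replacing u by w doesn't change the difference of integrals
    have hdiff : (∫ x, u x ∂μ) - ∫ x, u x ∂ν = (∫ x, w x ∂μ) - ∫ x, w x ∂ν := by
      have h1 : ∫ x, w x ∂μ = (∫ x, u x ∂μ) - u 0 := by
        simp only [hwdef]
        rw [integral_sub intμu (integrable_const _), integral_const]
        simp
        rfl
      have h2 : ∫ x, w x ∂ν = (∫ x, u x ∂ν) - u 0 := by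
        simp only [hwdef]
        rw [integral_sub intνu (integrable_const _), integral_const]
        simp
        rfl
      rw [h1, h2]; ring
    -- error estimates
    have err : ∀ (ρ : Measure E), IsProbabilityMeasure ρ → Integrable w ρ → Integrable v ρ →
        Integrable (fun x => ‖x‖ ^ p) ρ → (∫ x, ‖x‖ ^ p ∂ρ) ≤ b ^ p →
        |∫ x, (w x - v x) ∂ρ| ≤ c := by
      intro ρ _ hwρ hvρ hintρ hρp
      have h1 : |∫ x, (w x - v x) ∂ρ| ≤ ∫ x, |w x - v x| ∂ρ := by
        simpa [Real.norm_eq_abs] using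
          norm_integral_le_integral_norm (μ := ρ) (f := fun x => w x - v x)
      have h2 : ∫ x, |w x - v x| ∂ρ ≤ ∫ x, (2 / r) ^ (p - 1) * ‖x‖ ^ p ∂ρ :=
        integral_mono ((hwρ.sub hvρ).abs) (hintρ.const_mul _) h_wv
      have h3 : ∫ x, (2 / r) ^ (p - 1) * ‖x‖ ^ p ∂ρ = (2 / r) ^ (p - 1) * ∫ x, ‖x‖ ^ p ∂ρ :=
        integral_const_mul _ _
      have h4 : (2 / r) ^ (p - 1) * (∫ x, ‖x‖ ^ p ∂ρ) ≤ (2 / r) ^ (p - 1) * b ^ p :=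
        mul_le_mul_of_nonneg_left hρp (Real.rpow_nonneg (by positivity) _)
      calc |∫ x, (w x - v x) ∂ρ| ≤ ∫ x, |w x - v x| ∂ρ := h1
        _ ≤ ∫ x, (2 / r) ^ (p - 1) * ‖x‖ ^ p ∂ρ := h2
        _ = (2 / r) ^ (p - 1) * ∫ x, ‖x‖ ^ p ∂ρ := h3
        _ ≤ c := h4
    have errμ := err μ inferInstance intμw intμv hμint hμp
    have errν := err ν inferInstance intνw intνv hνint hνp
    -- the restricted supremum bounds the v-part
    have hVle : |(∫ x, v x ∂μ) - ∫ x, v x ∂ν| ≤ Wr := by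
      rw [hWrdef, wassersteinDualRestricted]
      exact le_ciSup hbdd (⟨v, lv, hv0, hvsupp⟩ : {u : E → ℝ //
        LipschitzWith 1 u ∧ u 0 = 0 ∧ ∀ x, r < ‖x‖ → u x = 0})
    have hsplit : (∫ x, w x ∂μ) - ∫ x, w x ∂ν
        = ((∫ x, v x ∂μ) - ∫ x, v x ∂ν)
          + ((∫ x, (w x - v x) ∂μ) - ∫ x, (w x - v x) ∂ν) := by
      rw [integral_sub intμw intμv, integral_sub intνw intνv]; ring
    calc |(∫ x, u x ∂μ) - ∫ x, u x ∂ν| = |(∫ x, w x ∂μ) - ∫ x, w x ∂ν| := by rw [hdiff]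
      _ = |((∫ x, v x ∂μ) - ∫ x, v x ∂ν)
          + ((∫ x, (w x - v x) ∂μ) - ∫ x, (w x - v x) ∂ν)| := by rw [hsplit]
      _ ≤ |(∫ x, v x ∂μ) - ∫ x, v x ∂ν|
          + |(∫ x, (w x - v x) ∂μ) - ∫ x, (w x - v x) ∂ν| := abs_add_le _ _
      _ ≤ |(∫ x, v x ∂μ) - ∫ x, v x ∂ν|
          + (|∫ x, (w x - v x) ∂μ| + |∫ x, (w x - v x) ∂ν|) := by
            have := abs_sub (∫ x, (w x - v x) ∂μ) (∫ x, (w x - v x) ∂ν)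
            linarith
      _ ≤ Wr + (c + c) := by
            have := hVle
            linarith
      _ = Wr + 2 * c := by ring
  -- final arithmetic
  have hbc : b * (2 * b / r) ^ (p - 1) = c := by
    rw [show 2 * b / r = (2 / r) * b by ring, Real.mul_rpow (by positivity) hb, hc]
    have hbp : b ^ p = b * b ^ (p - 1) := by
      rcases eq_or_lt_of_le hb with h | h
      · rw [← h, Real.zero_rpow hp0.ne', Real.zero_rpow (by linarith : p - 1 ≠ 0)]
        ring
      · have he : (1 : ℝ) + (p - 1) = p := by ring
        have h2 := Real.rpow_add h 1 (p - 1)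
        rw [Real.rpow_one, he] at h2
        exact h2
    rw [hbp]; ring
  have hfinal : Wr + 2 * c ≤ 3 * Wr + 4 * b * (2 * b / r) ^ (p - 1) := by
    have h4c : 4 * b * (2 * b / r) ^ (p - 1) = 4 * c := by
      rw [show 4 * b * (2 * b / r) ^ (p - 1) = 4 * (b * (2 * b / r) ^ (p - 1)) by ring, hbc]
    rw [h4c]; linarith
  rw [wassersteinDual]
  exact Real.iSup_le (fun u => (key u).trans hfinal) (le_trans (by linarith) hfinal)
end

section
/- Let X and Y be random vectors in ℝ^d with finite first absolute moments and characteristic functions f(t) = E e^{i⟨t,X⟩}, g(t) = E e^{i⟨t,Y⟩}. Then for every t ∈ ℝ^d, |f(t) − g(t)| ≤ 2|t| · sup_{|θ|=1} W(⟨X,θ⟩, ⟨Y,θ⟩). -/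
open MeasureTheory

section Aux

lemma abs_cos_sub_cos_le (a b : ℝ) : |Real.cos a - Real.cos b| ≤ |a - b| := by
  rw [Real.cos_sub_cos, abs_mul, abs_mul]
  have h1 : |Real.sin ((a + b) / 2)| ≤ 1 := Real.abs_sin_le_one _
  have h2 : |Real.sin ((a - b) / 2)| ≤ |(a - b) / 2| := Real.abs_sin_le_abs
  have h3 : |(a - b) / 2| = |a - b| / 2 := by rw [abs_div]; norm_num
  rw [h3] at h2
  calc |(-2 : ℝ)| * |Real.sin ((a + b) / 2)| * |Real.sin ((a - b) / 2)|
      = 2 * |Real.sin ((a + b) / 2)| * |Real.sin ((a - b) / 2)| := by norm_num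
    _ ≤ 2 * 1 * (|a - b| / 2) := by gcongr
    _ = |a - b| := by ring

lemma abs_sin_sub_sin_le (a b : ℝ) : |Real.sin a - Real.sin b| ≤ |a - b| := by
  rw [Real.sin_sub_sin, abs_mul, abs_mul]
  have h1 : |Real.cos ((a + b) / 2)| ≤ 1 := Real.abs_cos_le_one _
  have h2 : |Real.sin ((a - b) / 2)| ≤ |(a - b) / 2| := Real.abs_sin_le_abs
  have h3 : |(a - b) / 2| = |a - b| / 2 := by rw [abs_div]; norm_num
  rw [h3] at h2
  calc |(2 : ℝ)| * |Real.sin ((a - b) / 2)| * |Real.cos ((a + b) / 2)|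
      = 2 * |Real.sin ((a - b) / 2)| * |Real.cos ((a + b) / 2)| := by norm_num
    _ ≤ 2 * (|a - b| / 2) * 1 := by gcongr
    _ = |a - b| := by ring

instance : Nonempty {u : ℝ → ℝ // LipschitzWith 1 u} :=
  ⟨⟨fun _ => 0, (LipschitzWith.const 0).weaken zero_le_one⟩⟩

variable {Ω : Type*} [MeasureSpace Ω] [IsProbabilityMeasure (volume : Measure Ω)]

lemma integrable_lip_comp {u : ℝ → ℝ} (hu : LipschitzWith 1 u) {A : Ω → ℝ}
    (hA : Integrable A) : Integrable fun ω => u (A ω) := by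
  have hm : AEStronglyMeasurable (fun ω => u (A ω)) volume :=
    (hu.continuous.measurable.comp_aemeasurable hA.aemeasurable).aestronglyMeasurable
  refine Integrable.mono' (g := fun ω => |u 0| + |A ω|)
    ((integrable_const _).add hA.abs) hm (Filter.Eventually.of_forall fun ω => ?_)
  have hd : |u (A ω) - u 0| ≤ |A ω| := by
    have := hu.dist_le_mul (A ω) 0
    simpa [Real.dist_eq] using this
  calc ‖u (A ω)‖ = |u (A ω)| := rfl
    _ ≤ |u (A ω) - u 0| + |u 0| := by
        simpa using abs_add_le (u (A ω) - u 0) (u 0)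
    _ ≤ |u 0| + |A ω| := by linarith

lemma diff_integral_le {u : ℝ → ℝ} (hu : LipschitzWith 1 u) {A B : Ω → ℝ}
    (hA : Integrable A) (hB : Integrable B) :
    |(∫ ω, u (A ω)) - ∫ ω, u (B ω)| ≤ (∫ ω, |A ω|) + ∫ ω, |B ω| := by
  have key : ∀ (C : Ω → ℝ), Integrable C →
      |(∫ ω, u (C ω)) - u 0| ≤ ∫ ω, |C ω| := by
    intro C hC
    have hc : (∫ (_ : Ω), u 0) = u 0 := by simp
    have h1 : (∫ ω, u (C ω)) - u 0 = ∫ ω, (u (C ω) - u 0) := by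
      rw [integral_sub (integrable_lip_comp hu hC) (integrable_const _), hc]
    rw [h1]
    have habs : |∫ ω, (u (C ω) - u 0)| ≤ ∫ ω, |u (C ω) - u 0| := by
      simpa [Real.norm_eq_abs] using
        norm_integral_le_integral_norm (μ := volume) (fun ω => u (C ω) - u 0)
    refine habs.trans (integral_mono
      ((integrable_lip_comp hu hC).sub (integrable_const _)).abs hC.abs fun ω => ?_)
    have := hu.dist_le_mul (C ω) 0
    simpa [Real.dist_eq] using this
  have h1 := key A hA
  have h2 := key B hB
  have : |(∫ ω, u (A ω)) - ∫ ω, u (B ω)| ≤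
      |(∫ ω, u (A ω)) - u 0| + |(∫ ω, u (B ω)) - u 0| :=
    calc |(∫ ω, u (A ω)) - ∫ ω, u (B ω)|
        ≤ |(∫ ω, u (A ω)) - u 0| + |u 0 - ∫ ω, u (B ω)| := abs_sub_le _ _ _
      _ = |(∫ ω, u (A ω)) - u 0| + |(∫ ω, u (B ω)) - u 0| := by
          rw [abs_sub_comm (u 0)]
  linarith

lemma term_eq {u : ℝ → ℝ} (hu : LipschitzWith 1 u) {A : Ω → ℝ} (hA : AEMeasurable A) :
    (∫ x, u x ∂(Measure.map A volume)) = ∫ ω, u (A ω) := by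
  exact integral_map hA hu.continuous.aestronglyMeasurable

lemma wd_bddAbove {A B : Ω → ℝ} (hA : Integrable A) (hB : Integrable B) :
    BddAbove (Set.range fun u : {u : ℝ → ℝ // LipschitzWith 1 u} =>
      |(∫ x, u.1 x ∂(Measure.map A volume)) - ∫ x, u.1 x ∂(Measure.map B volume)|) := by
  refine ⟨(∫ ω, |A ω|) + ∫ ω, |B ω|, ?_⟩
  rintro x ⟨u, rfl⟩
  dsimp only
  rw [term_eq u.2 hA.aemeasurable, term_eq u.2 hB.aemeasurable]
  exact diff_integral_le u.2 hA hB

lemma wd_lb {u : ℝ → ℝ} (hu : LipschitzWith 1 u) {A B : Ω → ℝ}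
    (hA : Integrable A) (hB : Integrable B) :
    |(∫ ω, u (A ω)) - ∫ ω, u (B ω)| ≤
      wassersteinDual (Measure.map A volume) (Measure.map B volume) := by
  have := le_ciSup (wd_bddAbove hA hB) ⟨u, hu⟩
  rwa [term_eq hu hA.aemeasurable, term_eq hu hB.aemeasurable] at this

lemma wd_ub {A B : Ω → ℝ} (hA : Integrable A) (hB : Integrable B) :
    wassersteinDual (Measure.map A volume) (Measure.map B volume) ≤
      (∫ ω, |A ω|) + ∫ ω, |B ω| := by
  refine ciSup_le fun u => ?_
  rw [term_eq u.2 hA.aemeasurable, term_eq u.2 hB.aemeasurable]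
  exact diff_integral_le u.2 hA hB

/-- Decompose the characteristic-function integral. -/
lemma integral_exp_decomp {A : Ω → ℝ} (hA : Integrable A) :
    (∫ ω, Complex.exp (Complex.I * (A ω : ℂ))) =
      Complex.ofReal (∫ ω, Real.cos (A ω)) +
        Complex.ofReal (∫ ω, Real.sin (A ω)) * Complex.I := by
  have hexp : ∀ ω, Complex.exp (Complex.I * (A ω : ℂ)) =
      ((Real.cos (A ω) : ℂ)) + ((Real.sin (A ω) : ℂ)) * Complex.I := by
    intro ω
    rw [mul_comm, Complex.exp_mul_I, Complex.ofReal_cos, Complex.ofReal_sin]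
  have hcos : Integrable fun ω => Real.cos (A ω) := by
    refine Integrable.mono' (integrable_const 1)
      ((Real.continuous_cos.measurable.comp_aemeasurable
        hA.aemeasurable).aestronglyMeasurable) (Filter.Eventually.of_forall fun ω => ?_)
    exact Real.abs_cos_le_one _
  have hsin : Integrable fun ω => Real.sin (A ω) := by
    refine Integrable.mono' (integrable_const 1)
      ((Real.continuous_sin.measurable.comp_aemeasurable
        hA.aemeasurable).aestronglyMeasurable) (Filter.Eventually.of_forall fun ω => ?_)
    exact Real.abs_sin_le_one _
  have c1 : (∫ ω, ((Real.cos (A ω) : ℝ) : ℂ)) = ((∫ ω, Real.cos (A ω) : ℝ) : ℂ) :=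
    integral_ofReal
  have s1 : (∫ ω, ((Real.sin (A ω) : ℝ) : ℂ)) = ((∫ ω, Real.sin (A ω) : ℝ) : ℂ) :=
    integral_ofReal
  calc (∫ ω, Complex.exp (Complex.I * (A ω : ℂ)))
      = ∫ ω, (((Real.cos (A ω) : ℂ)) + ((Real.sin (A ω) : ℂ)) * Complex.I) := by
        exact integral_congr_ae (Filter.Eventually.of_forall hexp)
    _ = (∫ ω, ((Real.cos (A ω) : ℂ))) + ∫ ω, ((Real.sin (A ω) : ℂ)) * Complex.I := by
        refine integral_add (hcos.ofReal) ?_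
        exact (hsin.ofReal).mul_const _
    _ = Complex.ofReal (∫ ω, Real.cos (A ω)) +
        Complex.ofReal (∫ ω, Real.sin (A ω)) * Complex.I := by
        rw [integral_mul_const, c1, s1]

end Aux

theorem charFun_diff_le_sup_proj_wasserstein {d : ℕ} {Ω : Type*} [MeasureSpace Ω]
    [IsProbabilityMeasure (volume : Measure Ω)]
    (X Y : Ω → EuclideanSpace ℝ (Fin d)) (hXm : AEMeasurable X) (hYm : AEMeasurable Y)
    (hX : Integrable (fun ω => ‖X ω‖)) (hY : Integrable (fun ω => ‖Y ω‖))
    (t : EuclideanSpace ℝ (Fin d)) :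
    ‖(∫ ω, Complex.exp (Complex.I * ((inner ℝ t (X ω) : ℝ) : ℂ))) -
        ∫ ω, Complex.exp (Complex.I * ((inner ℝ t (Y ω) : ℝ) : ℂ))‖ ≤
      2 * ‖t‖ * ⨆ θ : {θ : EuclideanSpace ℝ (Fin d) // ‖θ‖ = 1},
        wassersteinDual (Measure.map (fun ω => (inner ℝ (X ω) θ.1 : ℝ)) volume)
          (Measure.map (fun ω => (inner ℝ (Y ω) θ.1 : ℝ)) volume) := by
  -- notation
  set P : Measure Ω := volume
  -- integrability of projections
  have hproj : ∀ (Z : Ω → EuclideanSpace ℝ (Fin d)), AEMeasurable Z →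
      Integrable (fun ω => ‖Z ω‖) → ∀ θ : EuclideanSpace ℝ (Fin d), ‖θ‖ = 1 →
      Integrable (fun ω => (inner ℝ (Z ω) θ : ℝ)) := by
    intro Z hZm hZ θ hθ
    have hm : AEStronglyMeasurable (fun ω => (inner ℝ (Z ω) θ : ℝ)) P :=
      ((Continuous.inner continuous_id continuous_const).measurable.comp_aemeasurable
        hZm).aestronglyMeasurable
    refine Integrable.mono' hZ hm (Filter.Eventually.of_forall fun ω => ?_)
    calc ‖(inner ℝ (Z ω) θ : ℝ)‖ = |(inner ℝ (Z ω) θ : ℝ)| := Real.norm_eq_abs _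
      _ ≤ ‖Z ω‖ * ‖θ‖ := abs_real_inner_le_norm _ _
      _ = ‖Z ω‖ := by rw [hθ, mul_one]
  -- supremum is bounded above
  have hbdd : BddAbove (Set.range fun θ : {θ : EuclideanSpace ℝ (Fin d) // ‖θ‖ = 1} =>
      wassersteinDual (Measure.map (fun ω => (inner ℝ (X ω) θ.1 : ℝ)) P)
        (Measure.map (fun ω => (inner ℝ (Y ω) θ.1 : ℝ)) P)) := by
    refine ⟨(∫ ω, ‖X ω‖) + ∫ ω, ‖Y ω‖, ?_⟩
    rintro x ⟨θ, rfl⟩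
    have hAX := hproj X hXm hX θ.1 θ.2
    have hAY := hproj Y hYm hY θ.1 θ.2
    refine (wd_ub hAX hAY).trans ?_
    have h1 : (∫ ω, |(inner ℝ (X ω) θ.1 : ℝ)|) ≤ ∫ ω, ‖X ω‖ := by
      refine integral_mono hAX.abs hX fun ω => ?_
      calc |(inner ℝ (X ω) θ.1 : ℝ)| ≤ ‖X ω‖ * ‖θ.1‖ := abs_real_inner_le_norm _ _
        _ = ‖X ω‖ := by rw [θ.2, mul_one]
    have h2 : (∫ ω, |(inner ℝ (Y ω) θ.1 : ℝ)|) ≤ ∫ ω, ‖Y ω‖ := by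
      refine integral_mono hAY.abs hY fun ω => ?_
      calc |(inner ℝ (Y ω) θ.1 : ℝ)| ≤ ‖Y ω‖ * ‖θ.1‖ := abs_real_inner_le_norm _ _
        _ = ‖Y ω‖ := by rw [θ.2, mul_one]
    linarith
  by_cases ht : t = 0
  · subst ht
    rw [show ‖(0 : EuclideanSpace ℝ (Fin d))‖ = (0 : ℝ) from norm_zero, mul_zero, zero_mul]
    simp [inner_zero_left]
  · have hs : 0 < ‖t‖ := norm_pos_iff.mpr ht
    set s : ℝ := ‖t‖ with hs_def
    set θ : EuclideanSpace ℝ (Fin d) := s⁻¹ • t with hθ_def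
    have hθn : ‖θ‖ = 1 := by
      rw [hθ_def, norm_smul, norm_inv, Real.norm_eq_abs, abs_of_pos hs]
      field_simp
      exact hs_def.symm
    have hA := hproj X hXm hX θ hθn
    have hB := hproj Y hYm hY θ hθn
    set A : Ω → ℝ := fun ω => (inner ℝ (X ω) θ : ℝ) with hA_def
    set B : Ω → ℝ := fun ω => (inner ℝ (Y ω) θ : ℝ) with hB_def
    have hinnerX : ∀ ω, (inner ℝ t (X ω) : ℝ) = s * A ω := by
      intro ω
      rw [real_inner_comm, hA_def]
      have : t = s • θ := by
        rw [hθ_def, smul_smul, mul_inv_cancel₀ hs.ne', one_smul]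
      calc (inner ℝ (X ω) t : ℝ) = (inner ℝ (X ω) (s • θ) : ℝ) := by rw [← this]
        _ = s * (inner ℝ (X ω) θ : ℝ) := real_inner_smul_right _ _ _
    have hinnerY : ∀ ω, (inner ℝ t (Y ω) : ℝ) = s * B ω := by
      intro ω
      rw [real_inner_comm, hB_def]
      have : t = s • θ := by
        rw [hθ_def, smul_smul, mul_inv_cancel₀ hs.ne', one_smul]
      calc (inner ℝ (Y ω) t : ℝ) = (inner ℝ (Y ω) (s • θ) : ℝ) := by rw [← this]
        _ = s * (inner ℝ (Y ω) θ : ℝ) := real_inner_smul_right _ _ _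
    have hsA : Integrable (fun ω => s * A ω) := hA.const_mul s
    have hsB : Integrable (fun ω => s * B ω) := hB.const_mul s
    -- decompose
    have hdX : (∫ ω, Complex.exp (Complex.I * ((inner ℝ t (X ω) : ℝ) : ℂ))) =
        Complex.ofReal (∫ ω, Real.cos (s * A ω)) +
          Complex.ofReal (∫ ω, Real.sin (s * A ω)) * Complex.I := by
      rw [show (fun ω => Complex.exp (Complex.I * ((inner ℝ t (X ω) : ℝ) : ℂ))) =
          fun ω => Complex.exp (Complex.I * ((s * A ω : ℝ) : ℂ)) by
        funext ω; rw [hinnerX ω]]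
      exact integral_exp_decomp hsA
    have hdY : (∫ ω, Complex.exp (Complex.I * ((inner ℝ t (Y ω) : ℝ) : ℂ))) =
        Complex.ofReal (∫ ω, Real.cos (s * B ω)) +
          Complex.ofReal (∫ ω, Real.sin (s * B ω)) * Complex.I := by
      rw [show (fun ω => Complex.exp (Complex.I * ((inner ℝ t (Y ω) : ℝ) : ℂ))) =
          fun ω => Complex.exp (Complex.I * ((s * B ω : ℝ) : ℂ)) by
        funext ω; rw [hinnerY ω]]
      exact integral_exp_decomp hsB
    -- Lipschitz test functions
    have hulip : ∀ (f : ℝ → ℝ), (∀ a b, |f a - f b| ≤ |a - b|) →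
        LipschitzWith 1 (fun x => f (s * x) / s) := by
      intro f hf
      refine LipschitzWith.of_dist_le_mul fun x y => ?_
      rw [Real.dist_eq, Real.dist_eq, NNReal.coe_one, one_mul, div_sub_div_same,
        abs_div, abs_of_pos hs, div_le_iff₀ hs]
      calc |f (s * x) - f (s * y)| ≤ |s * x - s * y| := hf _ _
        _ = |x - y| * s := by rw [← mul_sub, abs_mul, abs_of_pos hs]; ring
    have hcoslip := hulip Real.cos abs_cos_sub_cos_le
    have hsinlip := hulip Real.sin abs_sin_sub_sin_le
    set W : ℝ := wassersteinDual (Measure.map A P) (Measure.map B P) with hW_def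
    have hWle : ∀ (f : ℝ → ℝ), (∀ a b, |f a - f b| ≤ |a - b|) →
        |(∫ ω, f (s * A ω)) - ∫ ω, f (s * B ω)| ≤ s * W := by
      intro f hf
      have hl := hulip f hf
      have h := wd_lb hl hA hB
      have hAe : (∫ ω, f (s * A ω)) = s * ∫ ω, f (s * A ω) / s := by
        rw [integral_div]; field_simp
      have hBe : (∫ ω, f (s * B ω)) = s * ∫ ω, f (s * B ω) / s := by
        rw [integral_div]; field_simp
      rw [hAe, hBe, ← mul_sub, abs_mul, abs_of_pos hs]
      exact mul_le_mul_of_nonneg_left h hs.le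
    have hcos := hWle Real.cos abs_cos_sub_cos_le
    have hsin := hWle Real.sin abs_sin_sub_sin_le
    -- combine
    have hnorm : ‖(∫ ω, Complex.exp (Complex.I * ((inner ℝ t (X ω) : ℝ) : ℂ))) -
        ∫ ω, Complex.exp (Complex.I * ((inner ℝ t (Y ω) : ℝ) : ℂ))‖ ≤ 2 * s * W := by
      rw [hdX, hdY]
      have heq : (Complex.ofReal (∫ ω, Real.cos (s * A ω)) +
            Complex.ofReal (∫ ω, Real.sin (s * A ω)) * Complex.I)
          - (Complex.ofReal (∫ ω, Real.cos (s * B ω)) +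
            Complex.ofReal (∫ ω, Real.sin (s * B ω)) * Complex.I)
          = Complex.ofReal ((∫ ω, Real.cos (s * A ω)) - ∫ ω, Real.cos (s * B ω))
            + Complex.ofReal ((∫ ω, Real.sin (s * A ω)) - ∫ ω, Real.sin (s * B ω))
              * Complex.I := by
        rw [Complex.ofReal_sub, Complex.ofReal_sub]; ring
      rw [heq]
      set a : ℝ := (∫ ω, Real.cos (s * A ω)) - ∫ ω, Real.cos (s * B ω)
      set b : ℝ := (∫ ω, Real.sin (s * A ω)) - ∫ ω, Real.sin (s * B ω)
      have hab : ‖(Complex.ofReal a + Complex.ofReal b * Complex.I)‖ ≤ |a| + |b| := by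
        have h := Complex.norm_le_abs_re_add_abs_im
          (Complex.ofReal a + Complex.ofReal b * Complex.I)
        simpa using h
      calc ‖(Complex.ofReal a + Complex.ofReal b * Complex.I)‖ ≤ |a| + |b| := hab
        _ ≤ s * W + s * W := add_le_add hcos hsin
        _ = 2 * s * W := by ring
    refine hnorm.trans ?_
    have hWsup : W ≤ ⨆ θ' : {θ' : EuclideanSpace ℝ (Fin d) // ‖θ'‖ = 1},
        wassersteinDual (Measure.map (fun ω => (inner ℝ (X ω) θ'.1 : ℝ)) P)
          (Measure.map (fun ω => (inner ℝ (Y ω) θ'.1 : ℝ)) P) := by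
      exact le_ciSup hbdd ⟨θ, hθn⟩
    have h2s : (0:ℝ) ≤ 2 * s := by positivity
    calc 2 * s * W ≤ 2 * s * _ := mul_le_mul_of_nonneg_left hWsup h2s
      _ = _ := rfl
end
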